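/- Bias identity: with Φ ∈ R^{t×d}, λ > 0, Σ = ΦΦᵀ + λI_t, and for φ ∈ R^d with k = Φφ, define δ = ΦᵀΣ^{-1}k − φ. Then ||δ||² = (φᵀφ − kᵀΣ^{-1}k) − λ kᵀΣ^{-2}k. In particular ||δ||² ≤ φᵀφ − kᵀΣ^{-1}k. -/
import Mathlib
open Matrix

theorem stmt15 {t d : ℕ} (Φ : Matrix (Fin t) (Fin d) ℝ) (lam : ℝ) (hlam : 0 < lam)
    (φ : Fin d → ℝ) :
    let Sig : Matrix (Fin t) (Fin t) ℝ := Φ * Φᵀ + lam • 1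
    let k : Fin t → ℝ := Φ.mulVec φ
    let δ : Fin d → ℝ := Φᵀ.mulVec (Sig⁻¹.mulVec k) - φ
    (δ ⬝ᵥ δ = (φ ⬝ᵥ φ - k ⬝ᵥ Sig⁻¹.mulVec k) - lam * (k ⬝ᵥ (Sig⁻¹ * Sig⁻¹).mulVec k)) ∧
    δ ⬝ᵥ δ ≤ φ ⬝ᵥ φ - k ⬝ᵥ Sig⁻¹.mulVec k := by
  intro Sig k δ
  -- Sig is positive definite
  have hdiag : (lam • (1 : Matrix (Fin t) (Fin t) ℝ)) = Matrix.diagonal (fun _ => lam) := by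
    ext i j
    by_cases h : i = j <;> simp [Matrix.one_apply, Matrix.diagonal, h]
  have hpd : Sig.PosDef := by
    have h1 : (Φ * Φᵀ).PosSemidef := by
      have := Matrix.posSemidef_self_mul_conjTranspose Φ
      simpa using this
    have h2 : (lam • (1 : Matrix (Fin t) (Fin t) ℝ)).PosDef := by
      rw [hdiag]; exact Matrix.PosDef.diagonal fun _ => hlam
    have := h2.add_posSemidef h1
    simpa [Sig, add_comm] using this
  have hdet : IsUnit Sig.det := isUnit_iff_ne_zero.mpr (ne_of_gt hpd.det_pos)
  have hSigSymm : Sigᵀ = Sig := by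
    have := hpd.isHermitian
    simpa [Matrix.IsHermitian] using this
  have hinvSymm : (Sig⁻¹)ᵀ = Sig⁻¹ := by
    rw [Matrix.transpose_nonsing_inv, hSigSymm]
  set u : Fin t → ℝ := Sig⁻¹.mulVec k with hu
  have hSu : Sig.mulVec u = k := by
    rw [hu, Matrix.mulVec_mulVec, Matrix.mul_nonsing_inv _ hdet, Matrix.one_mulVec]
  -- dot product of Φᵀ u with itself
  have hΦu : (Φᵀ.mulVec u) ⬝ᵥ (Φᵀ.mulVec u) = u ⬝ᵥ k - lam * (u ⬝ᵥ u) := by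
    have h1 : (Φᵀ.mulVec u) ⬝ᵥ (Φᵀ.mulVec u) = u ⬝ᵥ ((Φ * Φᵀ).mulVec u) := by
      rw [Matrix.dotProduct_mulVec, Matrix.vecMul_transpose, Matrix.mulVec_mulVec,
        dotProduct_comm]
    rw [h1]
    have h2 : (Φ * Φᵀ).mulVec u = Sig.mulVec u - lam • u := by
      have : Sig.mulVec u = (Φ * Φᵀ).mulVec u + lam • u := by
        simp [Sig, Matrix.add_mulVec, Matrix.smul_mulVec, Matrix.one_mulVec]
      rw [this]; abel
    rw [h2, hSu, dotProduct_sub, dotProduct_smul, smul_eq_mul]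
  have hφΦu : φ ⬝ᵥ (Φᵀ.mulVec u) = k ⬝ᵥ u := by
    rw [Matrix.dotProduct_mulVec, Matrix.vecMul_transpose]
  have huu : u ⬝ᵥ u = k ⬝ᵥ (Sig⁻¹ * Sig⁻¹).mulVec k := by
    rw [hu, Matrix.dotProduct_mulVec, ← Matrix.mulVec_transpose, hinvSymm,
      Matrix.mulVec_mulVec, dotProduct_comm]
  have hku : k ⬝ᵥ u = u ⬝ᵥ k := dotProduct_comm _ _
  have hmain : δ ⬝ᵥ δ = (φ ⬝ᵥ φ - k ⬝ᵥ u) - lam * (k ⬝ᵥ (Sig⁻¹ * Sig⁻¹).mulVec k) := by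
    have hδ : δ = Φᵀ.mulVec u - φ := rfl
    rw [hδ, sub_dotProduct, dotProduct_sub, dotProduct_sub, hΦu, hφΦu,
      dotProduct_comm (Φᵀ.mulVec u) φ, hφΦu, huu, hku]
    ring
  refine ⟨hmain, ?_⟩
  rw [hmain]
  have hnn : 0 ≤ k ⬝ᵥ (Sig⁻¹ * Sig⁻¹).mulVec k := by
    rw [← huu]
    exact Finset.sum_nonneg fun i _ => mul_self_nonneg _
  nlinarith
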